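/- There exists a clopen subset O of (𝔈, τ) with 0 ∈ O such that for every clopen subset V of (𝔈, τ) with 0 ∈ V one has V + V ⊄ O; that is, no clopen neighborhood V of the identity satisfies V + V ⊆ O. -/

import Mathlib

noncomputable section

open scoped ENNReal

/-- The ambient Hilbert space `ℓ²` of real square-summable sequences. -/
abbrev ellTwo : Type := lp (fun _ : ℕ => ℝ) 2

/-- Erdős space `𝔈`: the additive subgroup of `ℓ²` consisting of the sequences
all of whose coordinates are rational. -/
def Erdos : AddSubgroup ellTwo where
  carrier := {x | ∀ k, ∃ q : ℚ, (x : ℕ → ℝ) k = (q : ℝ)}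
  add_mem' := by
    intro a b ha hb k
    obtain ⟨p, hp⟩ := ha k
    obtain ⟨q, hq⟩ := hb k
    exact ⟨p + q, by rw [lp.coeFn_add]; simp [hp, hq]⟩
  zero_mem' := fun k => ⟨0, by simp⟩
  neg_mem' := by
    intro a ha k
    obtain ⟨p, hp⟩ := ha k
    exact ⟨-p, by rw [lp.coeFn_neg]; simp [hp]⟩

/-- Erdős space as a type (with the subspace topology and norm inherited from `ℓ²`). -/
abbrev ErdosSpace : Type := ↥Erdos

/-- The coordinates of a point of Erdős space (indexed from `0`, so that the
coordinate `x_k` of the paper is `coords x (k-1)`). -/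
def coords (x : ErdosSpace) : ℕ → ℝ := ((x : ellTwo) : ℕ → ℝ)

/-- `mExists x α` says that `m_{x,α}` exists, i.e. some finite initial sum of squares
of coordinates exceeds `α` (here `m` counts how many initial coordinates are taken). -/
def mExists (x : ErdosSpace) (α : ℝ) : Prop :=
  ∃ m : ℕ, α < Real.sqrt (∑ k ∈ Finset.range m, (coords x k) ^ 2)

/-- `mIndex x α` is the least `m` such that `√(∑_{k<m} x_k²) > α` (and `0` if none exists);
this corresponds to `m_{x,α}` of the paper. -/
def mIndex (x : ErdosSpace) (α : ℝ) : ℕ :=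
  sInf {m : ℕ | α < Real.sqrt (∑ k ∈ Finset.range m, (coords x k) ^ 2)}

/-- The set `A_{α,β}`: those `x` for which either `m_{x,α}` exists and every coordinate
beyond the first `m_{x,α}` ones has absolute value `< β`, or `m_{x,α}` does not exist. -/
def A (α β : ℝ) : Set ErdosSpace :=
  {x | (mExists x α ∧ ∀ l, mIndex x α ≤ l → |coords x l| < β) ∨ ¬mExists x α}


namespace ErdosProof

open Topology

/-- partial sums of squares -/
def S (x : ErdosSpace) (m : ℕ) : ℝ := ∑ k ∈ Finset.range m, (coords x k) ^ 2

lemma S_nonneg (x : ErdosSpace) (m : ℕ) : 0 ≤ S x m :=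
  Finset.sum_nonneg fun _ _ => sq_nonneg _

lemma coords_rat (x : ErdosSpace) (k : ℕ) : ∃ q : ℚ, coords x k = (q : ℝ) := x.2 k

lemma S_rat (x : ErdosSpace) (m : ℕ) : ∃ q : ℚ, S x m = (q : ℝ) := by
  induction m with
  | zero => exact ⟨0, by simp [S]⟩
  | succ n ih =>
    obtain ⟨q, hq⟩ := ih
    obtain ⟨r, hr⟩ := coords_rat x n
    exact ⟨q + r ^ 2, by
      simp [S, Finset.sum_range_succ, ← (show S x n = _ from hq), hq, hr]⟩

lemma coords_add (x y : ErdosSpace) (k : ℕ) :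
    coords (x + y) k = coords x k + coords y k := by
  have : ((x + y : ErdosSpace) : ellTwo) = (x : ellTwo) + (y : ellTwo) := rfl
  simp [coords, this, lp.coeFn_add]

lemma coords_sub (x y : ErdosSpace) (k : ℕ) :
    coords (x - y) k = coords x k - coords y k := by
  have : ((x - y : ErdosSpace) : ellTwo) = (x : ellTwo) - (y : ellTwo) := rfl
  simp [coords, this, lp.coeFn_sub]

lemma coords_zero (k : ℕ) : coords (0 : ErdosSpace) k = 0 := by
  have : ((0 : ErdosSpace) : ellTwo) = 0 := rfl
  simp [coords, this]

lemma norm_coe (x : ErdosSpace) : ‖x‖ = ‖(x : ellTwo)‖ := rfl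

lemma summable_sq (x : ErdosSpace) : Summable (fun k => coords x k ^ 2) := by
  have := lp.memℓp (x : ellTwo)
  rw [memℓp_gen_iff (by norm_num : (0:ℝ) < (2:ℝ≥0∞).toReal)] at this
  have h2 : ((2:ℝ≥0∞)).toReal = (2:ℝ) := by norm_num
  rw [h2] at this
  refine this.congr fun k => ?_
  rw [show ((2:ℝ)) = ((2:ℕ):ℝ) by norm_num, Real.rpow_natCast]
  simp [coords, Real.norm_eq_abs, sq_abs]

lemma normsq_eq_tsum (x : ErdosSpace) : ‖x‖ ^ 2 = ∑' k, coords x k ^ 2 := by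
  have := lp.norm_rpow_eq_tsum (p := 2) (by norm_num) (x : ellTwo)
  have e : ∀ r : ℝ, r ^ ((2:ℝ≥0∞)).toReal = r ^ 2 := fun r => by
    rw [show ((2:ℝ≥0∞)).toReal = (((2:ℕ):ℝ)) by norm_num, Real.rpow_natCast]
  rw [e] at this
  rw [norm_coe, this]
  congr 1
  funext k
  rw [e, Real.norm_eq_abs, sq_abs]
  rfl

lemma S_le_normsq (x : ErdosSpace) (m : ℕ) : S x m ≤ ‖x‖ ^ 2 := by
  rw [normsq_eq_tsum]
  exact Summable.sum_le_tsum _ (fun k _ => sq_nonneg _) (summable_sq x)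

lemma abs_coords_le (x : ErdosSpace) (k : ℕ) : |coords x k| ≤ ‖x‖ := by
  have := lp.norm_apply_le_norm (p := 2) (by norm_num) (x : ellTwo) k
  simpa [coords, Real.norm_eq_abs, norm_coe] using this

lemma abs_coords_sub_le (x y : ErdosSpace) (k : ℕ) :
    |coords x k - coords y k| ≤ ‖x - y‖ := by
  have := abs_coords_le (x - y) k
  rwa [coords_sub] at this

lemma S_mono (x : ErdosSpace) : Monotone (S x) := by
  intro a b hab
  exact Finset.sum_le_sum_of_subset_of_nonneg (Finset.range_subset_range.2 hab)
    (fun _ _ _ => sq_nonneg _)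

lemma S_ne (x : ErdosSpace) {α : ℝ} (hα : Irrational (α ^ 2)) (m : ℕ) :
    S x m ≠ α ^ 2 := by
  obtain ⟨q, hq⟩ := S_rat x m
  rw [hq]
  exact fun h => hα ⟨q, h⟩

lemma mem_mset_iff {x : ErdosSpace} {α : ℝ} (hα : 0 ≤ α) (m : ℕ) :
    (α < Real.sqrt (∑ k ∈ Finset.range m, (coords x k) ^ 2)) ↔ α ^ 2 < S x m := by
  rw [show (∑ k ∈ Finset.range m, (coords x k) ^ 2) = S x m from rfl]
  exact Real.lt_sqrt hα

lemma mExists_iff {x : ErdosSpace} {α : ℝ} (hα : 0 ≤ α) :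
    mExists x α ↔ ∃ m, α ^ 2 < S x m := by
  unfold mExists
  exact exists_congr fun m => mem_mset_iff hα m

/-- coordinates tend to zero -/
lemma coords_small (x : ErdosSpace) {ε : ℝ} (hε : 0 < ε) :
    ∃ L : ℕ, ∀ l, L ≤ l → |coords x l| < ε := by
  have h := (summable_sq x).tendsto_atTop_zero
  have := Filter.Tendsto.eventually_lt_const (by positivity : (0:ℝ) < ε ^ 2) h
  rw [Filter.eventually_atTop] at this
  obtain ⟨L, hL⟩ := this
  refine ⟨L, fun l hl => ?_⟩
  have h2 := hL l hl
  have : |coords x l| ^ 2 < ε ^ 2 := by rwa [sq_abs]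
  exact lt_of_pow_lt_pow_left₀ 2 hε.le this

lemma continuous_coords (k : ℕ) : Continuous (fun x : ErdosSpace => coords x k) := by
    have : LipschitzWith 1 (fun x : ErdosSpace => coords x k) := by
      apply LipschitzWith.of_dist_le_mul
      intro x y
      rw [dist_eq_norm]
      push_cast
      rw [one_mul]
      calc ‖coords x k - coords y k‖ = |coords x k - coords y k| := rfl
        _ ≤ ‖x - y‖ := abs_coords_sub_le x y k
        _ = dist x y := (dist_eq_norm x y).symm
    exact this.continuous

lemma continuous_S (m : ℕ) : Continuous (fun x : ErdosSpace => S x m) := by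
  apply continuous_finset_sum
  intro k _
  exact (continuous_coords k).pow 2

section Clopen

variable {α β : ℝ}

lemma S_lt_of_not (hαirr : Irrational (α ^ 2)) {x : ErdosSpace} {m : ℕ}
    (h : ¬ α ^ 2 < S x m) : S x m < α ^ 2 :=
  lt_of_le_of_ne (not_lt.1 h) (S_ne x hαirr m)

lemma mIndex_eq_of (hα0 : 0 ≤ α) {y : ErdosSpace} {m : ℕ}
    (h1 : α ^ 2 < S y m) (h2 : ∀ k, k < m → S y k < α ^ 2) : mIndex y α = m := by
  have hmem : m ∈ {n : ℕ | α < Real.sqrt (∑ k ∈ Finset.range n, (coords y k) ^ 2)} := by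
    rw [Set.mem_setOf_eq, mem_mset_iff hα0]; exact h1
  refine le_antisymm (Nat.sInf_le hmem) ?_
  by_contra h
  push_neg at h
  have := Nat.sInf_mem ⟨m, hmem⟩
  rw [Set.mem_setOf_eq, mem_mset_iff hα0] at this
  exact absurd this (not_lt.2 (h2 _ h).le)

lemma lt_mIndex_of (hα0 : 0 ≤ α) {y : ErdosSpace} {L : ℕ}
    (hme : mExists y α) (h : S y L < α ^ 2) : L < mIndex y α := by
  by_contra hc
  push_neg at hc
  have h1 : α < Real.sqrt (∑ k ∈ Finset.range (mIndex y α), coords y k ^ 2) :=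
    Nat.sInf_mem hme
  rw [mem_mset_iff hα0] at h1
  have : α ^ 2 < S y L := lt_of_lt_of_le h1 (S_mono y hc)
  exact absurd this (not_lt.2 h.le)

lemma abs_coords_ne (hβirr : Irrational β) (x : ErdosSpace) (l : ℕ) :
    |coords x l| ≠ β := by
  obtain ⟨q, hq⟩ := coords_rat x l
  rw [hq, ← Rat.cast_abs]
  exact fun h => hβirr ⟨|q|, h⟩

lemma isOpen_A (hα0 : 0 ≤ α) (hαirr : Irrational (α ^ 2)) (hβ0 : 0 < β) :
    IsOpen (A α β) := by
  rw [isOpen_iff_mem_nhds]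
  intro x hx
  have hβ2 : (0:ℝ) < β / 2 := by positivity
  obtain ⟨L₀, hL₀⟩ := coords_small x hβ2
  rcases hx with ⟨hme, htail⟩ | hne
  · -- x crosses α and has small tail
    set m := mIndex x α with hm
    have hmem : α ^ 2 < S x m := by
      have h1 : α < Real.sqrt (∑ k ∈ Finset.range (mIndex x α), coords x k ^ 2) :=
        Nat.sInf_mem hme
      rwa [mem_mset_iff hα0] at h1
    have hsmall : ∀ k, k < m → S x k < α ^ 2 := by
      intro k hk
      refine S_lt_of_not hαirr ?_
      have h1 := Nat.notMem_of_lt_sInf (s := {n : ℕ |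
        α < Real.sqrt (∑ j ∈ Finset.range n, (coords x j) ^ 2)}) hk
      rw [Set.mem_setOf_eq, mem_mset_iff hα0] at h1
      exact h1
    set L := max L₀ m with hL
    have hN : ({y : ErdosSpace | α ^ 2 < S y m} ∩ (⋂ k ∈ Finset.range m, {y | S y k < α ^ 2})
        ∩ (⋂ l ∈ Finset.Ico m L, {y | |coords y l| < β}) ∩ Metric.ball x (β / 2)) ∈ 𝓝 x := by
      refine Filter.inter_mem (Filter.inter_mem (Filter.inter_mem ?_ ?_) ?_)
        (Metric.ball_mem_nhds x hβ2)
      · exact (isOpen_lt continuous_const (continuous_S m)).mem_nhds hmem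
      · refine (isOpen_biInter_finset fun k hk =>
          isOpen_lt (continuous_S k) continuous_const).mem_nhds ?_
        simp only [Set.mem_iInter]
        intro k hk
        exact hsmall k (Finset.mem_range.1 hk)
      · refine (isOpen_biInter_finset fun l _ =>
          isOpen_lt (continuous_coords l).abs continuous_const).mem_nhds ?_
        simp only [Set.mem_iInter]
        intro l hl
        exact htail l (Finset.mem_Ico.1 hl).1
    refine Filter.mem_of_superset hN ?_
    rintro y ⟨⟨⟨hy1, hy2⟩, hy3⟩, hy4⟩
    simp only [Set.mem_iInter] at hy2 hy3
    have hyme : mExists y α := ⟨m, (mem_mset_iff hα0 m).2 hy1⟩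
    have hyidx : mIndex y α = m := mIndex_eq_of hα0 hy1
      (fun k hk => hy2 k (Finset.mem_range.2 hk))
    refine Or.inl ⟨hyme, fun l hl => ?_⟩
    rw [hyidx] at hl
    by_cases hlL : l < L
    · exact hy3 l (Finset.mem_Ico.2 ⟨hl, hlL⟩)
    · push_neg at hlL
      have h1 : |coords x l| < β / 2 := hL₀ l (le_trans (le_max_left _ _) hlL)
      have h2 : |coords y l - coords x l| ≤ ‖y - x‖ := abs_coords_sub_le y x l
      have h3 : ‖y - x‖ < β / 2 := by
        rw [← dist_eq_norm]
        exact Metric.mem_ball.1 hy4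
      calc |coords y l| = |coords x l + (coords y l - coords x l)| := by ring_nf
        _ ≤ |coords x l| + |coords y l - coords x l| := abs_add_le _ _
        _ < β / 2 + β / 2 := by linarith [h2.trans_lt h3]
        _ = β := by ring
  · -- x does not cross α
    have hall : ∀ k, S x k < α ^ 2 := by
      intro k
      refine S_lt_of_not hαirr fun h => hne ⟨k, (mem_mset_iff hα0 k).2 h⟩
    have hN : ({y : ErdosSpace | S y L₀ < α ^ 2} ∩ Metric.ball x (β / 2)) ∈ 𝓝 x := by
      refine Filter.inter_mem ?_ (Metric.ball_mem_nhds x hβ2)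
      exact (isOpen_lt (continuous_S L₀) continuous_const).mem_nhds (hall L₀)
    refine Filter.mem_of_superset hN ?_
    rintro y ⟨hy1, hy2⟩
    by_cases hyme : mExists y α
    · refine Or.inl ⟨hyme, fun l hl => ?_⟩
      have hLm : L₀ < mIndex y α := lt_mIndex_of hα0 hyme hy1
      have hlL : L₀ ≤ l := le_trans hLm.le hl
      have h1 : |coords x l| < β / 2 := hL₀ l hlL
      have h2 : |coords y l - coords x l| ≤ ‖y - x‖ := abs_coords_sub_le y x l
      have h3 : ‖y - x‖ < β / 2 := by
        rw [← dist_eq_norm]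
        exact Metric.mem_ball.1 hy2
      calc |coords y l| = |coords x l + (coords y l - coords x l)| := by ring_nf
        _ ≤ |coords x l| + |coords y l - coords x l| := abs_add_le _ _
        _ < β / 2 + β / 2 := by linarith [h2.trans_lt h3]
        _ = β := by ring
    · exact Or.inr hyme

lemma isClosed_A (hα0 : 0 ≤ α) (hαirr : Irrational (α ^ 2)) (hβirr : Irrational β) :
    IsClosed (A α β) := by
  rw [← isOpen_compl_iff]
  have hcompl : (A α β)ᶜ =
      {x : ErdosSpace | mExists x α ∧ ∃ l, mIndex x α ≤ l ∧ β < |coords x l|} := by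
    ext x
    simp only [A, Set.mem_compl_iff, Set.mem_setOf_eq, not_or, not_and, not_forall, not_not]
    constructor
    · rintro ⟨h1, h2⟩
      refine ⟨h2, ?_⟩
      obtain ⟨l, hl, hnl⟩ := h1 h2
      push_neg at hnl
      exact ⟨l, hl, lt_of_le_of_ne hnl (fun h => abs_coords_ne hβirr x l h.symm)⟩
    · rintro ⟨h1, l, hl, hbig⟩
      exact ⟨fun _ => ⟨l, hl, by push_neg; exact hbig.le⟩, h1⟩
  rw [hcompl]
  rw [isOpen_iff_mem_nhds]
  rintro x ⟨hme, l₀, hl₀, hbig⟩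
  set m := mIndex x α with hm
  have hmem : α ^ 2 < S x m := by
    have h1 : α < Real.sqrt (∑ k ∈ Finset.range (mIndex x α), coords x k ^ 2) :=
      Nat.sInf_mem hme
    rwa [mem_mset_iff hα0] at h1
  have hsmall : ∀ k, k < m → S x k < α ^ 2 := by
    intro k hk
    refine S_lt_of_not hαirr ?_
    have h1 := Nat.notMem_of_lt_sInf (s := {n : ℕ |
      α < Real.sqrt (∑ j ∈ Finset.range n, (coords x j) ^ 2)}) hk
    rw [Set.mem_setOf_eq, mem_mset_iff hα0] at h1
    exact h1
  have hN : ({y : ErdosSpace | α ^ 2 < S y m} ∩ (⋂ k ∈ Finset.range m, {y | S y k < α ^ 2})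
      ∩ {y | β < |coords y l₀|}) ∈ 𝓝 x := by
    refine Filter.inter_mem (Filter.inter_mem ?_ ?_) ?_
    · exact (isOpen_lt continuous_const (continuous_S m)).mem_nhds hmem
    · refine (isOpen_biInter_finset fun k hk =>
        isOpen_lt (continuous_S k) continuous_const).mem_nhds ?_
      simp only [Set.mem_iInter]
      intro k hk
      exact hsmall k (Finset.mem_range.1 hk)
    · exact (isOpen_lt continuous_const (continuous_coords l₀).abs).mem_nhds hbig
  refine Filter.mem_of_superset hN ?_
  rintro y ⟨⟨hy1, hy2⟩, hy3⟩
  simp only [Set.mem_iInter] at hy2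
  have hyme : mExists y α := ⟨m, (mem_mset_iff hα0 m).2 hy1⟩
  have hyidx : mIndex y α = m := mIndex_eq_of hα0 hy1
    (fun k hk => hy2 k (Finset.mem_range.2 hk))
  exact ⟨hyme, l₀, by rw [hyidx]; exact hl₀, hy3⟩

end Clopen

section Single

/-- The element of Erdős space with value `q` at coordinate `n` and `0` elsewhere. -/
def single (n : ℕ) (q : ℚ) : ErdosSpace :=
  ⟨lp.single (E := fun _ : ℕ => ℝ) 2 n ((q : ℝ)), by
    intro k
    by_cases h : k = n
    · subst h
      exact ⟨q, by rw [lp.single_apply_self]⟩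
    · exact ⟨0, by rw [lp.single_apply_ne 2 n _ h]; simp⟩⟩

lemma coords_single (n : ℕ) (q : ℚ) (k : ℕ) :
    coords (single n q) k = if k = n then (q : ℝ) else 0 := by
  by_cases h : k = n
  · subst h
    simp only [if_pos rfl]
    exact lp.single_apply_self (E := fun _ : ℕ => ℝ) 2 k ((q:ℝ))
  · simp only [if_neg h]
    exact lp.single_apply_ne (E := fun _ : ℕ => ℝ) 2 n ((q:ℝ)) h

lemma norm_single (n : ℕ) (q : ℚ) : ‖single n q‖ = |(q : ℝ)| := by
  rw [norm_coe]
  have := lp.norm_single (p := 2) (E := fun _ : ℕ => ℝ) (by norm_num)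
    n (q : ℝ)
  exact this.trans (Real.norm_eq_abs _)

lemma ext_coords {x y : ErdosSpace} (h : ∀ k, coords x k = coords y k) : x = y := by
  apply Subtype.ext
  apply Subtype.ext
  funext k
  exact h k

lemma single_add (n : ℕ) (a b : ℚ) :
    single n (a + b) = single n a + single n b := by
  apply ext_coords
  intro k
  rw [coords_add, coords_single, coords_single, coords_single]
  by_cases h : k = n <;> simp [h]

end Single

section Unbounded

/-- Erdős' theorem: partial sums of squares are unbounded on any
clopen set containing `0`. -/
lemma erdos_unbounded (V : Set ErdosSpace) (hV : IsClopen V)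
    (h0 : (0 : ErdosSpace) ∈ V) (c : ℝ) :
    ∃ u ∈ V, ∃ m : ℕ, c < S u m := by
  by_contra hcon
  push_neg at hcon
  have hb : ∀ u ∈ V, ∀ m, S u m ≤ c := hcon
  -- the near-greedy step
  have step : ∀ (n : ℕ) (x : ErdosSpace), x ∈ V → (∀ k, n ≤ k → coords x k = 0) →
      ∃ r : ℚ, 0 ≤ r ∧ (x + single n r) ∈ V ∧
        (∀ s : ℚ, 0 ≤ s → (x + single n s) ∈ V → (s : ℝ) ≤ (r : ℝ) + (1/2) ^ n) := by
    intro n x hxV hx0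
    set T : Set ℝ := {t : ℝ | ∃ s : ℚ, (s : ℝ) = t ∧ 0 ≤ s ∧ (x + single n s) ∈ V} with hT
    have hTcoord : ∀ (s : ℚ), (x + single n s) ∈ V → (s:ℝ)^2 ≤ c := by
      intro s hsV
      have h1 : coords (x + single n s) n = (s : ℝ) := by
        rw [coords_add, coords_single, if_pos rfl, hx0 n le_rfl, zero_add]
      have h2 : (s:ℝ)^2 ≤ S (x + single n s) (n+1) := by
        rw [← h1]
        exact Finset.single_le_sum (f := fun k => coords (x + single n s) k ^ 2)
          (fun k _ => sq_nonneg _) (Finset.self_mem_range_succ n)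
      exact h2.trans (hb _ hsV (n+1))
    have hT0 : (0:ℝ) ∈ T := ⟨0, by simp, le_rfl, by
      have : single n (0:ℚ) = 0 := ext_coords fun k => by
        rw [coords_single, coords_zero]; split <;> simp
      rw [this, add_zero]; exact hxV⟩
    have hTbdd : BddAbove T := by
      refine ⟨Real.sqrt c, fun t ht => ?_⟩
      obtain ⟨s, hst, hs0, hsV⟩ := ht
      have := hTcoord s hsV
      calc t = (s:ℝ) := hst.symm
        _ = Real.sqrt ((s:ℝ)^2) := (Real.sqrt_sq (by exact_mod_cast hs0)).symm
        _ ≤ Real.sqrt c := Real.sqrt_le_sqrt this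
    set t₀ := sSup T with ht₀
    have hlt : t₀ - (1/2)^n < t₀ := by
      have : (0:ℝ) < (1/2)^n := by positivity
      linarith
    obtain ⟨t, htT, htgt⟩ := exists_lt_of_lt_csSup ⟨0, hT0⟩ hlt
    obtain ⟨r, hrt, hr0, hrV⟩ := htT
    refine ⟨r, hr0, hrV, ?_⟩
    intro s hs0 hsV
    have hsT : (s:ℝ) ∈ T := ⟨s, rfl, hs0, hsV⟩
    have h1 : (s:ℝ) ≤ t₀ := le_csSup hTbdd hsT
    have h2 : t₀ - (1/2)^n < (r:ℝ) := by rw [hrt]; exact htgt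
    linarith
  choose! R hR1 hR2 hR3 using step
  -- the recursively defined sequence
  set X : ℕ → ErdosSpace := fun n =>
    Nat.rec (0 : ErdosSpace) (fun n xn => xn + single n (R n xn)) n with hX
  have hXsucc : ∀ n, X (n+1) = X n + single n (R n (X n)) := fun n => rfl
  set q : ℕ → ℚ := fun n => R n (X n) with hq
  have hinv : ∀ n, X n ∈ V ∧ ∀ k, n ≤ k → coords (X n) k = 0 := by
    intro n
    induction n with
    | zero => exact ⟨h0, fun k _ => coords_zero k⟩
    | succ n ih =>
      obtain ⟨ih1, ih2⟩ := ih
      refine ⟨by rw [hXsucc]; exact hR2 n (X n) ih1 ih2, ?_⟩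
      intro k hk
      rw [hXsucc, coords_add, coords_single, ih2 k (by omega), if_neg (by omega)]
      simp
  have hq0 : ∀ n, 0 ≤ q n := fun n => hR1 n (X n) (hinv n).1 (hinv n).2
  have hcoordX : ∀ n k, k < n → coords (X n) k = (q k : ℝ) := by
    intro n
    induction n with
    | zero => omega
    | succ n ih =>
      intro k hk
      rw [hXsucc, coords_add, coords_single]
      rcases Nat.lt_or_ge k n with h | h
      · rw [ih k h, if_neg (by omega), add_zero]
      · have hkn : k = n := by omega
        subst hkn
        rw [(hinv k).2 k le_rfl, if_pos rfl, zero_add]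
  have hsum_bound : ∀ n, ∑ k ∈ Finset.range n, ((q k : ℝ))^2 ≤ c := by
    intro n
    have h1 : S (X n) n = ∑ k ∈ Finset.range n, ((q k : ℝ))^2 := by
      unfold S
      refine Finset.sum_congr rfl fun k hk => ?_
      rw [hcoordX n k (Finset.mem_range.1 hk)]
    rw [← h1]
    exact hb _ (hinv n).1 n
  have hsummable : Summable (fun k => ((q k : ℝ))^2) :=
    summable_of_sum_range_le (fun n => sq_nonneg _) hsum_bound
  -- the limit point
  have hmem : Memℓp (fun k => ((q k : ℝ))) 2 := by
    apply memℓp_gen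
    refine hsummable.congr fun k => ?_
    rw [show ((2:ℝ≥0∞)).toReal = (((2:ℕ):ℝ)) by norm_num, Real.rpow_natCast,
      Real.norm_eq_abs, sq_abs]
  set xl : ellTwo := ⟨fun k => ((q k : ℝ)), hmem⟩ with hxl
  set xe : ErdosSpace := ⟨xl, fun k => ⟨q k, rfl⟩⟩ with hxe
  have hXcoe : ∀ n, ((X n : ErdosSpace) : ellTwo)
      = ∑ i ∈ Finset.range n, lp.single 2 i ((xl : ℕ → ℝ) i) := by
    intro n
    induction n with
    | zero => simp [hX]
    | succ n ih =>
      rw [Finset.sum_range_succ, ← ih, hXsucc]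
      rfl
  have htend : Filter.Tendsto X Filter.atTop (𝓝 xe) := by
    rw [tendsto_subtype_rng]
    have := (lp.hasSum_single (E := fun _ : ℕ => ℝ) (p := 2)
      (by norm_num) xl).tendsto_sum_nat
    refine this.congr fun n => ?_
    rw [← hXcoe n]
  have hxeV : xe ∈ V := hV.isClosed.mem_of_tendsto htend
    (Filter.Eventually.of_forall fun n => (hinv n).1)
  obtain ⟨ε, hε, hball⟩ := Metric.isOpen_iff.1 hV.isOpen xe hxeV
  -- choose a large index
  have hev1 : ∀ᶠ n in Filter.atTop, dist (X n) xe < ε/4 :=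
    (Metric.tendsto_nhds.1 htend) (ε/4) (by positivity)
  have hev2 : ∀ᶠ n in Filter.atTop, ((1:ℝ)/2)^n < ε/4 := by
    have := tendsto_pow_atTop_nhds_zero_of_lt_one
      (by norm_num : (0:ℝ) ≤ 1/2) (by norm_num)
    exact this.eventually_lt_const (by positivity)
  obtain ⟨N, hN⟩ := Filter.eventually_atTop.1 (hev1.and hev2)
  -- push the N-th coordinate
  obtain ⟨δ, hδ1, hδ2⟩ := exists_rat_btwn
    (show ((1:ℝ)/2)^N < ε/2 by linarith [(hN N le_rfl).2])
  have hδpos : (0:ℝ) < (δ:ℝ) := lt_trans (by positivity) hδ1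
  set z : ErdosSpace := X N + single N (q N + δ) with hz
  have hzV : z ∈ V := by
    apply hball
    rw [Metric.mem_ball, dist_eq_norm]
    have hsplit : z - xe = (X (N+1) - xe) + single N δ := by
      rw [hz, hXsucc, single_add]
      abel
    rw [hsplit]
    calc ‖(X (N+1) - xe) + single N δ‖ ≤ ‖X (N+1) - xe‖ + ‖single N δ‖ := norm_add_le _ _
      _ < ε/4 + ε/2 := by
          apply add_lt_add
          · rw [← dist_eq_norm]
            exact (hN (N+1) (by omega)).1
          · rw [norm_single, abs_of_pos hδpos]
            exact hδ2
      _ < ε := by linarith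
  have hδq : (0:ℚ) < δ := by exact_mod_cast hδpos
  have := hR3 N (X N) (hinv N).1 (hinv N).2 (q N + δ)
    (add_nonneg (hq0 N) hδq.le) hzV
  push_cast at this
  have h12 : ((1:ℝ)/2)^N < (δ:ℝ) := hδ1
  linarith

end Unbounded

section Main

def αseq (n : ℕ) : ℝ := ((n : ℝ) + 1) * Real.sqrt (Real.sqrt 2)

def βseq (n : ℕ) : ℝ := Real.sqrt 2 / ((2 ^ n : ℕ) : ℝ)

lemma sqrt_sqrt_two_ge_one : (1:ℝ) ≤ Real.sqrt (Real.sqrt 2) := by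
  rw [show (1:ℝ) = Real.sqrt 1 by simp]
  apply Real.sqrt_le_sqrt
  rw [show (1:ℝ) = Real.sqrt 1 by simp]
  exact Real.sqrt_le_sqrt (by norm_num)

lemma αseq_nonneg (n : ℕ) : 0 ≤ αseq n := by
  unfold αseq
  positivity

lemma αseq_pos (n : ℕ) : 0 < αseq n := by
  unfold αseq
  have := sqrt_sqrt_two_ge_one
  nlinarith [Nat.cast_nonneg (α := ℝ) n]

lemma lt_αseq (n : ℕ) : (n : ℝ) < αseq n := by
  unfold αseq
  have := sqrt_sqrt_two_ge_one
  nlinarith [Nat.cast_nonneg (α := ℝ) n]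

lemma sq_αseq (n : ℕ) : (αseq n) ^ 2 = ((n : ℝ) + 1) ^ 2 * Real.sqrt 2 := by
  unfold αseq
  rw [mul_pow, Real.sq_sqrt (Real.sqrt_nonneg 2)]

lemma αseq_irr (n : ℕ) : Irrational ((αseq n) ^ 2) := by
  rw [sq_αseq]
  have h := irrational_sqrt_two.ratCast_mul (q := ((n : ℚ) + 1) ^ 2)
    (by positivity)
  have e : ((((n : ℚ) + 1) ^ 2 : ℚ) : ℝ) = ((n : ℝ) + 1) ^ 2 := by push_cast; ring
  rwa [e] at h

lemma βseq_pos (n : ℕ) : 0 < βseq n := by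
  unfold βseq
  have h2 : (0:ℝ) < Real.sqrt 2 := Real.sqrt_pos.2 (by norm_num)
  positivity

lemma βseq_irr (n : ℕ) : Irrational (βseq n) :=
  irrational_sqrt_two.div_natCast (by positivity)

lemma not_mExists_of_norm_lt {y : ErdosSpace} {n : ℕ} (h : ‖y‖ < αseq n) :
    ¬ mExists y (αseq n) := by
  rw [mExists_iff (αseq_nonneg n)]
  rintro ⟨m, hm⟩
  have h1 : S y m ≤ ‖y‖ ^ 2 := S_le_normsq y m
  have h2 : ‖y‖ ^ 2 < (αseq n) ^ 2 :=
    pow_lt_pow_left₀ h (norm_nonneg y) (by norm_num)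
  linarith

def Oset : Set ErdosSpace := ⋂ n, A (αseq n) (βseq n)

lemma zero_mem_Oset : (0 : ErdosSpace) ∈ Oset := by
  rw [Oset, Set.mem_iInter]
  intro n
  exact Or.inr (not_mExists_of_norm_lt (by rw [norm_zero]; exact αseq_pos n))

lemma isClosed_Oset : IsClosed Oset :=
  isClosed_iInter fun n => isClosed_A (αseq_nonneg n) (αseq_irr n) (βseq_irr n)

lemma isOpen_Oset : IsOpen Oset := by
  rw [isOpen_iff_mem_nhds]
  intro x hx
  obtain ⟨N, hN⟩ := exists_nat_gt (‖x‖ + 1)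
  have hmem : ((⋂ k ∈ Finset.range N, A (αseq k) (βseq k)) ∩ Metric.ball x 1) ∈ 𝓝 x := by
    refine Filter.inter_mem ?_ (Metric.ball_mem_nhds x one_pos)
    refine (isOpen_biInter_finset fun k _ =>
      isOpen_A (αseq_nonneg k) (αseq_irr k) (βseq_pos k)).mem_nhds ?_
    simp only [Set.mem_iInter]
    intro k _
    exact Set.mem_iInter.1 hx k
  refine Filter.mem_of_superset hmem ?_
  rintro y ⟨hy1, hy2⟩
  simp only [Set.mem_iInter] at hy1
  rw [Oset, Set.mem_iInter]
  intro n
  rcases Nat.lt_or_ge n N with h | h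
  · exact hy1 n (Finset.mem_range.2 h)
  · refine Or.inr (not_mExists_of_norm_lt ?_)
    have h1 : ‖y‖ ≤ ‖x‖ + ‖y - x‖ := by
      calc ‖y‖ = ‖x + (y - x)‖ := by congr 1; abel
        _ ≤ ‖x‖ + ‖y - x‖ := norm_add_le _ _
    have h2 : ‖y - x‖ < 1 := by
      rw [← dist_eq_norm]
      exact Metric.mem_ball.1 hy2
    have h3 : (N : ℝ) ≤ (n : ℝ) := by exact_mod_cast h
    have h4 := lt_αseq n
    linarith

lemma βseq_small {ε : ℝ} (hε : 0 < ε) : ∃ n, βseq n < ε := by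
  have h : Filter.Tendsto βseq Filter.atTop (𝓝 0) := by
    have h1 : βseq = fun n => Real.sqrt 2 * ((1:ℝ)/2) ^ n := by
      funext n
      rw [βseq, div_pow, one_pow]
      push_cast
      ring
    rw [h1]
    have := tendsto_pow_atTop_nhds_zero_of_lt_one
      (by norm_num : (0:ℝ) ≤ 1/2) (by norm_num)
    simpa using this.const_mul (Real.sqrt 2)
  obtain ⟨n, hn⟩ := Filter.eventually_atTop.1 (h.eventually_lt_const hε)
  exact ⟨n, hn n le_rfl⟩

end Main

end ErdosProof

/-- There is a clopen subset `O` of Erdős space containing `0` such that no clopen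
set `V` containing `0` satisfies `V + V ⊆ O`. -/
theorem exists_clopen_no_clopen_sum_nbhd :
    ∃ O : Set ErdosSpace, IsClopen O ∧ (0 : ErdosSpace) ∈ O ∧
      ∀ V : Set ErdosSpace, IsClopen V → (0 : ErdosSpace) ∈ V →
        ∃ u ∈ V, ∃ v ∈ V, u + v ∉ O := by
  classical
  open ErdosProof in
  refine ⟨Oset, ⟨isClosed_Oset, isOpen_Oset⟩, zero_mem_Oset, ?_⟩
  intro V hV h0V
  obtain ⟨ε₀, hε₀, hball⟩ := Metric.isOpen_iff.1 hV.isOpen 0 h0V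
  obtain ⟨δ, hδ1, hδ2⟩ := exists_rat_btwn hε₀
  have hδpos : (0:ℝ) < (δ:ℝ) := hδ1
  obtain ⟨n, hn⟩ := βseq_small (show (0:ℝ) < (δ:ℝ)/2 by linarith)
  obtain ⟨u, huV, m₀, hu2⟩ := erdos_unbounded V hV h0V ((αseq n) ^ 2)
  obtain ⟨L, hL⟩ := coords_small u (show (0:ℝ) < (δ:ℝ)/2 by linarith)
  set l := max m₀ L with hl
  set v := single l δ with hv
  have hvV : v ∈ V := by
    apply hball
    rw [Metric.mem_ball, dist_zero_right, hv, norm_single, abs_of_pos hδpos]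
    exact hδ2
  set w := u + v with hw
  have hcw : ∀ k, coords w k = coords u k + (if k = l then (δ:ℝ) else 0) := by
    intro k
    rw [hw, coords_add, hv, coords_single]
  have hSw : S w m₀ = S u m₀ := by
    unfold S
    refine Finset.sum_congr rfl fun k hk => ?_
    have hkl : k ≠ l := by
      have := Finset.mem_range.1 hk
      omega
    rw [hcw k, if_neg hkl, add_zero]
  have hα0n : 0 ≤ αseq n := αseq_nonneg n
  have hme : mExists w (αseq n) :=
    ⟨m₀, (mem_mset_iff hα0n m₀).2 (by rw [hSw]; exact hu2)⟩
  have hidx : mIndex w (αseq n) ≤ l := by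
    refine le_trans (Nat.sInf_le ?_) (le_max_left m₀ L)
    rw [Set.mem_setOf_eq, mem_mset_iff hα0n]
    rw [hSw]; exact hu2
  have hbig : βseq n < |coords w l| := by
    have h1 : |coords u l| < (δ:ℝ)/2 := hL l (le_max_right m₀ L)
    have h2 : coords w l = coords u l + (δ:ℝ) := by rw [hcw l, if_pos rfl]
    have h3 : (δ:ℝ)/2 < coords w l := by
      have := abs_lt.1 h1
      linarith [this.1]
    calc βseq n < (δ:ℝ)/2 := hn
      _ < coords w l := h3
      _ ≤ |coords w l| := le_abs_self _
  refine ⟨u, huV, v, hvV, ?_⟩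
  intro hwO
  have hwA : w ∈ A (αseq n) (βseq n) := Set.mem_iInter.1 hwO n
  rcases hwA with ⟨_, htail⟩ | hnme
  · exact absurd (htail l hidx) (not_lt.2 hbig.le)
  · exact hnme hme
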